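/- Fix p ∈ (3,5], r₀ ∈ (0,1], C₁ > 0 and ε ∈ (0, 1/p). Let φ : (0,r₀) → ℝ be continuous with |φ| ≤ 1, and suppose y : (0,r₀) → ℝ is twice continuously differentiable, satisfies |y(r)| ≤ C₁·r^{−ε} for all r ∈ (0,r₀), and the function r ↦ r·y(r) satisfies (d²/dr²)(r·y(r)) = −r·φ(r)·|y(r)|^{p−1}·y(r) on (0,r₀). Then the limit C₂ := lim_{r→0⁺} (d/dr)(r·y(r)) exists and is finite, and |y(r) − C₂| ≤ (C₁^p/2)·r for all r ∈ (0,r₀); in particular y extends to a continuous function on [0,r₀). -/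

import Mathlib

open Set Filter
open Topology

/-- if `y` is `C²` on `(0,r₀)` with `|y(r)| ≤ C₁ r^{-ε}`,
`ε ∈ (0,1/p)`, and `w(r) = r y(r)` satisfies `w'' = -r φ(r) |y|^{p-1} y`
with `|φ| ≤ 1`, then `w'` has a finite limit `C₂` at `0⁺`,
`|y(r) - C₂| ≤ (C₁^p/2) r`, and `y` extends continuously to `[0, r₀)`. -/
theorem radial_extension_at_origin (p r₀ C₁ ε : ℝ) (hp : 3 < p) (hp5 : p ≤ 5)
    (hr₀ : r₀ ∈ Ioc (0 : ℝ) 1) (hC₁ : 0 < C₁) (hε : ε ∈ Ioo (0 : ℝ) (1 / p))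
    (φ y : ℝ → ℝ) (hφc : ContinuousOn φ (Ioo 0 r₀))
    (hφb : ∀ r ∈ Ioo 0 r₀, |φ r| ≤ 1)
    (hy : ContDiffOn ℝ 2 y (Ioo 0 r₀))
    (hybd : ∀ r ∈ Ioo 0 r₀, |y r| ≤ C₁ * r ^ (-ε))
    (hode : ∀ r ∈ Ioo 0 r₀,
      deriv (deriv (fun s => s * y s)) r = -(r * φ r * |y r| ^ (p - 1) * y r)) :
    ∃ C₂ : ℝ,
      Tendsto (deriv (fun s => s * y s)) (nhdsWithin 0 (Ioo 0 r₀)) (nhds C₂) ∧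
      (∀ r ∈ Ioo 0 r₀, |y r - C₂| ≤ C₁ ^ p / 2 * r) ∧
      ∃ g : ℝ → ℝ, ContinuousOn g (Ico 0 r₀) ∧ ∀ r ∈ Ioo 0 r₀, g r = y r := by
  obtain ⟨hr0, hr1⟩ := hr₀
  obtain ⟨hε0, hεp⟩ := hε
  have hp0 : (0:ℝ) < p := by linarith
  set w : ℝ → ℝ := fun s => s * y s with hw_def
  set M : ℝ := C₁ ^ p with hM_def
  have hM0 : 0 < M := Real.rpow_pos_of_pos hC₁ p
  have hIoo_open : IsOpen (Ioo (0:ℝ) r₀) := isOpen_Ioo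
  have hw_cd : ContDiffOn ℝ 2 w (Ioo 0 r₀) := contDiffOn_id.mul hy
  have hw'_cd : ContDiffOn ℝ 1 (deriv w) (Ioo 0 r₀) :=
    hw_cd.deriv_of_isOpen hIoo_open (by norm_num)
  have hw'_diff : ∀ x ∈ Ioo (0:ℝ) r₀, DifferentiableAt ℝ (deriv w) x := fun x hx =>
    ((hw'_cd.differentiableOn one_ne_zero) x hx).differentiableAt (hIoo_open.mem_nhds hx)
  have hw_diff : ∀ x ∈ Ioo (0:ℝ) r₀, DifferentiableAt ℝ w x := fun x hx =>
    ((hw_cd.differentiableOn two_ne_zero) x hx).differentiableAt (hIoo_open.mem_nhds hx)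
  have hw'_cont : ContinuousOn (deriv w) (Ioo 0 r₀) := hw'_cd.continuousOn
  have hεp1 : ε * p < 1 := (lt_div_iff₀ hp0).mp hεp
  -- bound on w''
  have hbound : ∀ r ∈ Ioo (0:ℝ) r₀, |deriv (deriv w) r| ≤ M := by
    intro r hr
    obtain ⟨hr0', hrr⟩ := hr
    have hr1' : r ≤ 1 := hrr.le.trans hr1
    have hy0 : (0:ℝ) ≤ |y r| := abs_nonneg _
    rw [hode r ⟨hr0', hrr⟩, abs_neg, abs_mul, abs_mul, abs_mul,
      abs_of_pos hr0', abs_of_nonneg (Real.rpow_nonneg hy0 _)]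
    have h1 : |y r| ^ (p-1) * |y r| = |y r| ^ p := by
      nth_rewrite 2 [← Real.rpow_one |y r|]
      rw [← Real.rpow_add_of_nonneg hy0 (by linarith) zero_le_one]
      norm_num
    have h2 : |y r| ^ p ≤ (C₁ * r ^ (-ε)) ^ p :=
      Real.rpow_le_rpow hy0 (hybd r ⟨hr0', hrr⟩) hp0.le
    have h3 : (C₁ * r ^ (-ε)) ^ p = M * r ^ (-(ε * p)) := by
      rw [Real.mul_rpow hC₁.le (Real.rpow_nonneg hr0'.le _), ← Real.rpow_mul hr0'.le]
      ring_nf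
      rw [hM_def]; ring
    have h4 : r * r ^ (-(ε * p)) = r ^ (1 - ε * p) := by
      rw [show (1 - ε * p) = 1 + -(ε * p) by ring, Real.rpow_add hr0', Real.rpow_one]
    have h5 : r ^ (1 - ε * p) ≤ 1 := Real.rpow_le_one hr0'.le hr1' (by linarith)
    calc r * |φ r| * |y r| ^ (p - 1) * |y r|
        ≤ r * 1 * |y r| ^ (p - 1) * |y r| := by
          gcongr
          exact hφb r ⟨hr0', hrr⟩
      _ = r * (|y r| ^ (p-1) * |y r|) := by ring
      _ = r * |y r| ^ p := by rw [h1]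
      _ ≤ r * (C₁ * r ^ (-ε)) ^ p := by gcongr
      _ = M * (r * r ^ (-(ε * p))) := by rw [h3]; ring
      _ = M * r ^ (1 - ε * p) := by rw [h4]
      _ ≤ M * 1 := by gcongr
      _ = M := mul_one M
  -- Lipschitz bound on w'
  have hlip : ∀ a ∈ Ioo (0:ℝ) r₀, ∀ b ∈ Ioo (0:ℝ) r₀,
      |deriv w a - deriv w b| ≤ M * |a - b| := by
    intro a ha b hb
    have := (convex_Ioo (0:ℝ) r₀).norm_image_sub_le_of_norm_deriv_le hw'_diff
      (fun x hx => by rw [Real.norm_eq_abs]; exact hbound x hx) hb ha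
    simpa [Real.norm_eq_abs] using this
  -- monotone auxiliary function k
  set k : ℝ → ℝ := fun r => deriv w r + M * r with hk_def
  have hk_hasderiv : ∀ x ∈ Ioo (0:ℝ) r₀,
      HasDerivAt k (deriv (deriv w) x + M * 1) x := fun x hx =>
    ((hw'_diff x hx).hasDerivAt).add ((hasDerivAt_id x).const_mul M)
  have hk_mono : MonotoneOn k (Ioo 0 r₀) := by
    apply monotoneOn_of_deriv_nonneg (convex_Ioo _ _)
    · exact hw'_cont.add (continuous_const.mul continuous_id).continuousOn
    · rw [interior_Ioo]
      exact fun x hx => ((hk_hasderiv x hx).differentiableAt).differentiableWithinAt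
    · intro x hx
      rw [interior_Ioo] at hx
      rw [(hk_hasderiv x hx).deriv]
      have := (abs_le.mp (hbound x hx)).1
      linarith
  have hne : (Ioo (0:ℝ) r₀).Nonempty := ⟨r₀/2, by constructor <;> linarith⟩
  have hm : r₀/2 ∈ Ioo (0:ℝ) r₀ := ⟨by linarith, by linarith⟩
  have hk_bdd : BddBelow (k '' Ioo 0 r₀) := by
    refine ⟨deriv w (r₀/2) - M, ?_⟩
    rintro _ ⟨s, hs, rfl⟩
    have h1 : |deriv w s - deriv w (r₀/2)| ≤ M * |s - r₀/2| := hlip s hs _ hm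
    have h2 : |s - r₀/2| ≤ 1 := by
      rw [abs_le]
      have := hs.1; have := hs.2
      constructor <;> linarith
    have h3 : deriv w (r₀/2) - deriv w s ≤ M := by
      have := (abs_le.mp h1).1
      nlinarith [abs_nonneg (s - r₀/2)]
    have h4 : 0 ≤ M * s := mul_nonneg hM0.le hs.1.le
    show deriv w (r₀/2) - M ≤ deriv w s + M * s
    linarith
  -- the limit C₂
  set C₂ : ℝ := sInf (k '' Ioo 0 r₀) with hC₂_def
  have hk_tend : Tendsto k (𝓝[>] (0:ℝ)) (𝓝 C₂) :=
    MonotoneOn.tendsto_nhdsWithin_Ioo_right hne hk_mono hk_bdd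
  have hMr_tend : Tendsto (fun r : ℝ => M * r) (𝓝[>] (0:ℝ)) (𝓝 0) := by
    have : Tendsto (fun r : ℝ => M * r) (𝓝 0) (𝓝 (M * 0)) :=
      (continuous_const.mul continuous_id).tendsto 0
    rw [mul_zero] at this
    exact this.mono_left nhdsWithin_le_nhds
  have hw'_tendI : Tendsto (deriv w) (𝓝[>] (0:ℝ)) (𝓝 C₂) := by
    have h := hk_tend.sub hMr_tend
    rw [sub_zero] at h
    exact h.congr (fun r => by simp only [hk_def]; ring)
  have hnhds_eq : 𝓝[Ioo (0:ℝ) r₀] 0 = 𝓝[>] (0:ℝ) := nhdsWithin_Ioo_eq_nhdsGT hr0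
  have hw'_tend : Tendsto (deriv w) (𝓝[Ioo (0:ℝ) r₀] 0) (𝓝 C₂) := by
    rw [hnhds_eq]; exact hw'_tendI
  -- |w' r - C₂| ≤ M r
  have hw'C₂ : ∀ r ∈ Ioo (0:ℝ) r₀, |deriv w r - C₂| ≤ M * r := by
    intro r hr
    have hev : ∀ᶠ s in 𝓝[>] (0:ℝ), |deriv w r - deriv w s| ≤ M * r := by
      filter_upwards [Ioo_mem_nhdsGT_of_mem ⟨le_refl (0:ℝ), hr.1⟩] with s hs
      have hsI : s ∈ Ioo (0:ℝ) r₀ := ⟨hs.1, hs.2.trans hr.2⟩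
      calc |deriv w r - deriv w s| ≤ M * |r - s| := hlip r hr s hsI
        _ ≤ M * r := by
            have : |r - s| ≤ r := by rw [abs_le]; have := hs.1; have := hs.2; constructor <;> linarith
            exact mul_le_mul_of_nonneg_left this hM0.le
    have htd : Tendsto (fun s => |deriv w r - deriv w s|) (𝓝[>] (0:ℝ))
        (𝓝 |deriv w r - C₂|) := (tendsto_const_nhds.sub hw'_tendI).abs
    exact le_of_tendsto htd hev
  -- w tends to 0
  have hε1 : ε < 1 := by
    have : 1 / p < 1 := by rw [div_lt_one hp0]; linarith
    linarith
  have hw0 : Tendsto w (𝓝[>] (0:ℝ)) (𝓝 0) := by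
    have hpow : Tendsto (fun s : ℝ => C₁ * s ^ (1 - ε)) (𝓝[>] (0:ℝ)) (𝓝 0) := by
      have h1 : ContinuousAt (fun s : ℝ => s ^ (1 - ε)) 0 :=
        Real.continuousAt_rpow_const 0 (1 - ε) (Or.inr (by linarith))
      have h2 : Tendsto (fun s : ℝ => s ^ (1 - ε)) (𝓝 0) (𝓝 0) := by
        have := h1.tendsto
        rwa [Real.zero_rpow (by linarith : (1:ℝ) - ε ≠ 0)] at this
      have := (h2.const_mul C₁).mono_left (nhdsWithin_le_nhds (s := Ioi (0:ℝ)))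
      rwa [mul_zero] at this
    apply squeeze_zero_norm' _ hpow
    filter_upwards [Ioo_mem_nhdsGT_of_mem ⟨le_refl (0:ℝ), hr0⟩] with s hs
    have hs0 : 0 < s := hs.1
    rw [Real.norm_eq_abs]
    have : |w s| = s * |y s| := by
      simp only [hw_def, abs_mul, abs_of_pos hs0]
    rw [this]
    calc s * |y s| ≤ s * (C₁ * s ^ (-ε)) :=
          mul_le_mul_of_nonneg_left (hybd s hs) hs0.le
      _ = C₁ * (s * s ^ (-ε)) := by ring
      _ = C₁ * s ^ (1 - ε) := by
          rw [show (1:ℝ) - ε = 1 + -ε by ring, Real.rpow_add hs0, Real.rpow_one]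
  -- auxiliary functions for the quadratic bound
  set v : ℝ → ℝ := fun r => w r - (C₂ * r + M/2 * (r * r)) with hv_def
  set v2 : ℝ → ℝ := fun r => w r - (C₂ * r - M/2 * (r * r)) with hv2_def
  have hv_hasderiv : ∀ x ∈ Ioo (0:ℝ) r₀,
      HasDerivAt v (deriv w x - (C₂ * 1 + M/2 * (1 * x + x * 1))) x := fun x hx =>
    ((hw_diff x hx).hasDerivAt).sub
      (((hasDerivAt_id x).const_mul C₂).add
        (((hasDerivAt_id x).mul (hasDerivAt_id x)).const_mul (M/2)))
  have hv2_hasderiv : ∀ x ∈ Ioo (0:ℝ) r₀,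
      HasDerivAt v2 (deriv w x - (C₂ * 1 - M/2 * (1 * x + x * 1))) x := fun x hx =>
    ((hw_diff x hx).hasDerivAt).sub
      (((hasDerivAt_id x).const_mul C₂).sub
        (((hasDerivAt_id x).mul (hasDerivAt_id x)).const_mul (M/2)))
  have hv_anti : AntitoneOn v (Ioo 0 r₀) := by
    apply antitoneOn_of_deriv_nonpos (convex_Ioo _ _)
    · exact fun x hx => ((hv_hasderiv x hx).differentiableAt).continuousAt.continuousWithinAt
    · rw [interior_Ioo]
      exact fun x hx => ((hv_hasderiv x hx).differentiableAt).differentiableWithinAt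
    · intro x hx
      rw [interior_Ioo] at hx
      rw [(hv_hasderiv x hx).deriv]
      have := (abs_le.mp (hw'C₂ x hx)).2
      nlinarith
  have hv2_mono : MonotoneOn v2 (Ioo 0 r₀) := by
    apply monotoneOn_of_deriv_nonneg (convex_Ioo _ _)
    · exact fun x hx => ((hv2_hasderiv x hx).differentiableAt).continuousAt.continuousWithinAt
    · rw [interior_Ioo]
      exact fun x hx => ((hv2_hasderiv x hx).differentiableAt).differentiableWithinAt
    · intro x hx
      rw [interior_Ioo] at hx
      rw [(hv2_hasderiv x hx).deriv]
      have := (abs_le.mp (hw'C₂ x hx)).1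
      nlinarith
  have hpoly : Tendsto (fun r : ℝ => C₂ * r + M/2 * (r * r)) (𝓝[>] (0:ℝ)) (𝓝 0) := by
    have : Tendsto (fun r : ℝ => C₂ * r + M/2 * (r * r)) (𝓝 0)
        (𝓝 (C₂ * 0 + M/2 * (0 * 0))) :=
      Continuous.tendsto ((continuous_const.mul continuous_id).add
        (continuous_const.mul (continuous_id.mul continuous_id))) 0
    simp only [mul_zero, zero_mul, add_zero] at this
    exact this.mono_left nhdsWithin_le_nhds
  have hpoly2 : Tendsto (fun r : ℝ => C₂ * r - M/2 * (r * r)) (𝓝[>] (0:ℝ)) (𝓝 0) := by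
    have : Tendsto (fun r : ℝ => C₂ * r - M/2 * (r * r)) (𝓝 0)
        (𝓝 (C₂ * 0 - M/2 * (0 * 0))) :=
      Continuous.tendsto ((continuous_const.mul continuous_id).sub
        (continuous_const.mul (continuous_id.mul continuous_id))) 0
    simp only [mul_zero, zero_mul, sub_zero] at this
    exact this.mono_left nhdsWithin_le_nhds
  have hv_tend : Tendsto v (𝓝[>] (0:ℝ)) (𝓝 0) := by
    have := hw0.sub hpoly
    rwa [sub_zero] at this
  have hv2_tend : Tendsto v2 (𝓝[>] (0:ℝ)) (𝓝 0) := by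
    have := hw0.sub hpoly2
    rwa [sub_zero] at this
  have hv_le : ∀ r ∈ Ioo (0:ℝ) r₀, v r ≤ 0 := by
    intro r hr
    refine ge_of_tendsto hv_tend ?_
    filter_upwards [Ioo_mem_nhdsGT_of_mem ⟨le_refl (0:ℝ), hr.1⟩] with s hs
    exact hv_anti ⟨hs.1, hs.2.trans hr.2⟩ hr hs.2.le
  have hv2_ge : ∀ r ∈ Ioo (0:ℝ) r₀, 0 ≤ v2 r := by
    intro r hr
    refine le_of_tendsto hv2_tend ?_
    filter_upwards [Ioo_mem_nhdsGT_of_mem ⟨le_refl (0:ℝ), hr.1⟩] with s hs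
    exact hv2_mono ⟨hs.1, hs.2.trans hr.2⟩ hr hs.2.le
  -- final bound on y
  have hybound : ∀ r ∈ Ioo (0:ℝ) r₀, |y r - C₂| ≤ M / 2 * r := by
    intro r hr
    have h1 := hv_le r hr
    have h2 := hv2_ge r hr
    have habs : |w r - C₂ * r| ≤ M/2 * (r * r) := by
      rw [abs_le]
      constructor
      · simp only [hv2_def] at h2; linarith
      · simp only [hv_def] at h1; linarith
    have hwr : w r - C₂ * r = (y r - C₂) * r := by
      simp only [hw_def]; ring
    rw [hwr, abs_mul, abs_of_pos hr.1] at habs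
    have := (mul_le_mul_iff_left₀ hr.1).mp (by linarith [habs] : |y r - C₂| * r ≤ (M/2 * r) * r)
    exact this
  -- assemble the result
  refine ⟨C₂, hw'_tend, hybound, ⟨fun r => if r = 0 then C₂ else y r, ?_, ?_⟩⟩
  · intro x hx
    rcases eq_or_lt_of_le hx.1 with h0 | h0
    · subst h0
      have hb : Tendsto (fun s : ℝ => M/2 * s) (𝓝[Ico (0:ℝ) r₀] 0) (𝓝 0) := by
        have : Tendsto (fun s : ℝ => M/2 * s) (𝓝 0) (𝓝 (M/2 * 0)) :=
          (continuous_const.mul continuous_id).tendsto 0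
        rw [mul_zero] at this
        exact this.mono_left nhdsWithin_le_nhds
      have hdiff : Tendsto (fun s : ℝ => (if s = 0 then C₂ else y s) - C₂)
          (𝓝[Ico (0:ℝ) r₀] 0) (𝓝 0) := by
        apply squeeze_zero_norm' _ hb
        filter_upwards [self_mem_nhdsWithin] with s hs
        rw [Real.norm_eq_abs]
        rcases eq_or_lt_of_le hs.1 with hs0 | hs0
        · rw [if_pos hs0.symm, ← hs0]
          simp
        · rw [if_neg (ne_of_gt hs0)]
          exact hybound s ⟨hs0, hs.2⟩
      have htg : Tendsto (fun s : ℝ => if s = 0 then C₂ else y s)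
          (𝓝[Ico (0:ℝ) r₀] 0) (𝓝 C₂) := by
        have := hdiff.add (tendsto_const_nhds (x := C₂))
        rw [zero_add] at this
        exact this.congr (fun s => by ring)
      show Tendsto _ (𝓝[Ico (0:ℝ) r₀] 0) (𝓝 (if (0:ℝ) = 0 then C₂ else y 0))
      rw [if_pos rfl]
      exact htg
    · have hxIoo : x ∈ Ioo (0:ℝ) r₀ := ⟨h0, hx.2⟩
      have hyc : ContinuousAt y x :=
        (hy.continuousOn x hxIoo).continuousAt (hIoo_open.mem_nhds hxIoo)
      have heq : (fun r : ℝ => if r = 0 then C₂ else y r) =ᶠ[𝓝 x] y := by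
        filter_upwards [isOpen_Ioi.mem_nhds h0] with s hs
        exact if_neg (ne_of_gt hs)
      exact (hyc.congr heq.symm).continuousWithinAt
  · intro r hr
    exact if_neg (ne_of_gt hr.1)
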